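/- The adjoint integral matrix A† = W^{−1} A^T W_{2:N} ∈ ℝ^{N×(N−1)} (columns indexed j = 2,…,N) satisfies: A†_{i,j} = ∫_{τ_i}^{1} M_j(τ) dτ − w_N M_j(1) for all i = 1,…,N and j = 2,…,N−1, and A†_{i,N} = w_N for all i = 1,…,N. -/
import Mathlib


open Polynomial

/-- `lagL τ i` is the `i`-th Lagrange basis polynomial (of degree `N - 1`)
for the nodes `τ 0, …, τ (N-1)`, satisfying `(lagL τ i).eval (τ j) = δᵢⱼ`. -/
noncomputable def lagL {N : ℕ} (τ : Fin N → ℝ) (i : Fin N) : ℝ[X] :=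
  Lagrange.basis Finset.univ τ i

/-- `lagLp τ` is the polynomial `L_p(x) = ∏ᵢ (x - τᵢ)`. -/
noncomputable def lagLp {N : ℕ} (τ : Fin N → ℝ) : ℝ[X] :=
  ∏ i, (X - C (τ i))

/-- The differentiation matrix `D`, with `D i j = L_j'(τ i)`. -/
noncomputable def matD {N : ℕ} (τ : Fin N → ℝ) : Matrix (Fin N) (Fin N) ℝ :=
  fun i j => (derivative (lagL τ j)).eval (τ i)

/-- The vector `D_p`, with `(D_p) i = L_p'(τ i)`. -/
noncomputable def vecDp {N : ℕ} (τ : Fin N → ℝ) : Fin N → ℝ :=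
  fun i => (derivative (lagLp τ)).eval (τ i)

/-- Columns `2, …, N+1` (in 1-based numbering) of the augmented differentiation
matrix `D̃ = [D  D_p]`: column `j` (0-based, `j < N - 1`) is column `j + 1` of `D`,
and the last column is `D_p`. -/
noncomputable def matDtil2 {N : ℕ} (τ : Fin N → ℝ) : Matrix (Fin N) (Fin N) ℝ :=
  fun i j => if h : (j : ℕ) + 1 < N then matD τ i ⟨(j : ℕ) + 1, h⟩ else vecDp τ i

/-- The quadrature rule with nodes `τ` and weights `w` integrates exactly all
polynomials of degree at most `2 * N - 3` over `[-1, 1]`. -/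
def IsQuadrature {N : ℕ} (τ : Fin N → ℝ) (w : Fin N → ℝ) : Prop :=
  ∀ p : ℝ[X], p.natDegree ≤ 2 * N - 3 →
    ∑ i, w i * p.eval (τ i) = ∫ t in (-1 : ℝ)..1, p.eval t

/-- The integration matrix `A` with rows indexed (0-based) by `i : Fin (N-1)`
corresponding to the node `τ (i+1)`: `A i j = ∫_{-1}^{τ (i+1)} L_j(t) dt`. -/
noncomputable def matA {N : ℕ} (τ : Fin N → ℝ) : Matrix (Fin (N - 1)) (Fin N) ℝ :=
  fun i j => ∫ t in (-1 : ℝ)..(τ ⟨(i : ℕ) + 1, by have := i.isLt; omega⟩), (lagL τ j).eval t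

/-- The row vector `A_p`, with `(A_p) j = (1/N) ∏_{k ≠ j} 1 / (τ j - τ k)`. -/
noncomputable def rowAp {N : ℕ} (τ : Fin N → ℝ) : Fin N → ℝ :=
  fun j => (1 / (N : ℝ)) * ∏ k ∈ Finset.univ.erase j, (τ j - τ k)⁻¹

/-- The matrix `Ã` obtained by stacking `A` on top of the row vector `A_p`. -/
noncomputable def matAtil {N : ℕ} (τ : Fin N → ℝ) : Matrix (Fin N) (Fin N) ℝ :=
  fun i j => if h : (i : ℕ) + 1 < N then matA τ ⟨(i : ℕ), by omega⟩ j else rowAp τ j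

/-- The adjoint integration matrix `A† = W⁻¹ Aᵀ W_{2:N}`, with columns indexed
(0-based) by `j : Fin (N-1)` corresponding to the node `τ (j+1)`. -/
noncomputable def matAdag {N : ℕ} (τ : Fin N → ℝ) (w : Fin N → ℝ) :
    Matrix (Fin N) (Fin (N - 1)) ℝ :=
  fun i j => (w i)⁻¹ * matA τ j i * w ⟨(j : ℕ) + 1, by have := j.isLt; omega⟩

/-- `polyM τ k` is the Lagrange basis polynomial (of degree `N - 3`) for the
interior nodes `τ 1, …, τ (N-2)`, satisfying `(polyM τ k).eval (τ m) = δₖₘ`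
for interior indices `m`. -/
noncomputable def polyM {N : ℕ} (τ : Fin N → ℝ) (k : Fin N) : ℝ[X] :=
  Lagrange.basis (Finset.univ.filter fun m : Fin N => 0 < (m : ℕ) ∧ (m : ℕ) < N - 1) τ k

/-- The polynomial `λ(x) = ∑ᵢ (A† r)ᵢ Lᵢ(x)`. -/
noncomputable def lamP {N : ℕ} (τ : Fin N → ℝ) (w : Fin N → ℝ) (r : Fin (N - 1) → ℝ) : ℝ[X] :=
  ∑ i, C ((matAdag τ w).mulVec r i) * lagL τ i


noncomputable def antider (p : ℝ[X]) : ℝ[X] :=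
  p.sum fun n a => C (a / (n + 1)) * X ^ (n + 1)

lemma derivative_antider (p : ℝ[X]) : derivative (antider p) = p := by
  unfold antider
  rw [Polynomial.sum, map_sum]
  have h : ∀ n ∈ p.support,
      derivative (C (p.coeff n / (n + 1)) * X ^ (n + 1)) = C (p.coeff n) * X ^ n := by
    intro n _
    rw [derivative_C_mul, derivative_X_pow, ← mul_assoc, ← C_mul, Nat.add_sub_cancel]
    congr 1
    have h1 : ((n : ℝ) + 1) ≠ 0 := by positivity
    push_cast
    field_simp
  rw [Finset.sum_congr rfl h]
  exact Polynomial.sum_C_mul_X_pow_eq p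

lemma natDegree_antider_le (p : ℝ[X]) : (antider p).natDegree ≤ p.natDegree + 1 := by
  unfold antider
  rw [Polynomial.sum]
  apply Polynomial.natDegree_sum_le_of_forall_le
  intro n hn
  refine le_trans (natDegree_C_mul_le _ _) ?_
  simpa using Nat.add_le_add_right (Polynomial.le_natDegree_of_mem_supp n hn) 1

lemma integral_derivative_eval (p : ℝ[X]) (a b : ℝ) :
    ∫ t in a..b, (derivative p).eval t = p.eval b - p.eval a := by
  apply intervalIntegral.integral_eq_sub_of_hasDerivAt (fun x _ => p.hasDerivAt x)
  exact ((derivative p).continuous).intervalIntegrable a b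

lemma integral_eval (p : ℝ[X]) (a b : ℝ) :
    ∫ t in a..b, p.eval t = (antider p).eval b - (antider p).eval a := by
  rw [← integral_derivative_eval (antider p) a b, derivative_antider]

/-- The entries of the adjoint integration matrix `A†`: for interior columns
(paper indices `j = 2, …, N-1`, here `(j : ℕ) < N - 2`, node `τ (j+1)`),
`A†ᵢⱼ = ∫_{τᵢ}^{1} M_j(t) dt - w_N M_j(1)`, and the last column is constantly `w_N`. -/
theorem stmt6 (N : ℕ) (hN : 3 ≤ N) (τ : Fin N → ℝ) (hmono : StrictMono τ)
    (h0 : τ ⟨0, by omega⟩ = -1) (h1 : τ ⟨N - 1, by omega⟩ = 1) (w : Fin N → ℝ) (hw : ∀ i, 0 < w i) (hquad : IsQuadrature τ w) :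
    (∀ i : Fin N, ∀ j : Fin (N - 1), (j : ℕ) < N - 2 →
      matAdag τ w i j =
        (∫ t in (τ i)..(1 : ℝ), (polyM τ ⟨(j : ℕ) + 1, by have := j.isLt; omega⟩).eval t)
          - w ⟨N - 1, by omega⟩ * (polyM τ ⟨(j : ℕ) + 1, by have := j.isLt; omega⟩).eval 1) ∧
    (∀ i : Fin N, matAdag τ w i ⟨N - 2, by omega⟩ = w ⟨N - 1, by omega⟩) := by
  have hNe : ∀ i : Fin N, (w i) ≠ 0 := fun i => (hw i).ne'
  have hinj : Function.Injective τ := hmono.injective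
  have hinjOn : ∀ s : Finset (Fin N), Set.InjOn τ ↑s := fun s => Set.injOn_of_injective hinj
  have hLdeg : ∀ i : Fin N, (lagL τ i).natDegree = N - 1 := by
    intro i
    unfold lagL
    rw [Lagrange.natDegree_basis (hinjOn _) (Finset.mem_univ i), Finset.card_univ,
      Fintype.card_fin]
  set q : Fin N → ℝ[X] := fun i => antider (lagL τ i) - C ((antider (lagL τ i)).eval (-1))
    with hqdef
  have hqint : ∀ (i : Fin N) (x : ℝ), ∫ t in (-1:ℝ)..x, (lagL τ i).eval t = (q i).eval x := by
    intro i x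
    rw [integral_eval]
    simp [hqdef]
  have hqderiv : ∀ i, derivative (q i) = lagL τ i := by
    intro i; simp [hqdef, derivative_antider]
  have hqdeg : ∀ i, (q i).natDegree ≤ N := by
    intro i
    refine le_trans (natDegree_sub_le _ _) ?_
    simp only [natDegree_C, max_le_iff]
    refine ⟨le_trans (natDegree_antider_le _) (by rw [hLdeg]; omega), by omega⟩
  have hqm1 : ∀ i, (q i).eval (-1) = 0 := by intro i; simp [hqdef]
  have evalL_self : ∀ i : Fin N, (lagL τ i).eval (τ i) = 1 := fun i =>
    Lagrange.eval_basis_self (hinjOn _) (Finset.mem_univ i)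
  have evalL_ne : ∀ i m : Fin N, m ≠ i → (lagL τ i).eval (τ m) = 0 := fun i m hmi =>
    Lagrange.eval_basis_of_ne (Ne.symm hmi) (Finset.mem_univ m)
  have sumP : ∀ (i : Fin N) (P : ℝ[X]),
      ∑ m, w m * (P * lagL τ i).eval (τ m) = w i * P.eval (τ i) := by
    intro i P
    rw [Finset.sum_eq_single i
      (fun m _ hmi => by rw [eval_mul, evalL_ne i m hmi, mul_zero, mul_zero])
      (fun h => absurd (Finset.mem_univ i) h), eval_mul, evalL_self, mul_one]
  have hLquad : ∀ i : Fin N, ∫ t in (-1:ℝ)..1, (lagL τ i).eval t = w i := by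
    intro i
    rw [← hquad (lagL τ i) (by rw [hLdeg]; omega)]
    rw [Finset.sum_eq_single i
      (fun m _ hmi => by rw [evalL_ne i m hmi, mul_zero])
      (fun h => absurd (Finset.mem_univ i) h), evalL_self, mul_one]
  have hq1 : ∀ i, (q i).eval 1 = w i := fun i => by rw [← hqint i 1, hLquad]
  have hτlast : ∀ h : N - 1 < N, τ ⟨N - 1, h⟩ = 1 := fun _ => h1
  have hτ0 : ∀ h : 0 < N, τ ⟨0, h⟩ = -1 := fun _ => h0
  constructor
  · -- interior columns
    intro i j hj
    have hkN : (j : ℕ) + 1 < N := by omega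
    set k : Fin N := ⟨(j : ℕ) + 1, hkN⟩ with hk
    set S : Finset (Fin N) :=
      Finset.univ.filter (fun m : Fin N => 0 < (m : ℕ) ∧ (m : ℕ) < N - 1) with hS
    have hkS : k ∈ S := by
      rw [hS]
      simp only [Finset.mem_filter, Finset.mem_univ, true_and, hk, Fin.val_mk]
      omega
    have hScard : S.card ≤ N - 2 := by
      have hlN : N - 1 < N := by omega
      have h0N : (0 : ℕ) < N := by omega
      have hmem : (⟨0, h0N⟩ : Fin N) ∈ Finset.univ.erase (⟨N - 1, hlN⟩ : Fin N) := by
        simp only [Finset.mem_erase, Finset.mem_univ, and_true, ne_eq, Fin.ext_iff, Fin.val_mk]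
        omega
      have hsub : S ⊆ (Finset.univ.erase (⟨N - 1, hlN⟩ : Fin N)).erase (⟨0, h0N⟩ : Fin N) := by
        intro m hm
        rw [hS] at hm
        simp only [Finset.mem_filter, Finset.mem_univ, true_and] at hm
        simp only [Finset.mem_erase, Finset.mem_univ, and_true, ne_eq, Fin.ext_iff, Fin.val_mk]
        omega
      have := Finset.card_le_card hsub
      rw [Finset.card_erase_of_mem hmem, Finset.card_erase_of_mem (Finset.mem_univ _),
        Finset.card_univ, Fintype.card_fin] at this
      omega
    set M : ℝ[X] := polyM τ k with hM
    have hMdeg : M.natDegree ≤ N - 3 := by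
      rw [hM]
      unfold polyM
      rw [show (Finset.univ.filter fun m : Fin N => 0 < (m : ℕ) ∧ (m : ℕ) < N - 1) = S from
        hS.symm]
      rw [Lagrange.natDegree_basis (hinjOn _) hkS]
      omega
    have hMk : M.eval (τ k) = 1 := Lagrange.eval_basis_self (hinjOn _) hkS
    have hMm : ∀ m : Fin N, m ∈ S → m ≠ k → M.eval (τ m) = 0 := fun m hmS hmk =>
      Lagrange.eval_basis_of_ne (Ne.symm hmk) hmS
    set Q : ℝ[X] := C ((antider M).eval 1) - antider M with hQ
    have hQint : ∀ x : ℝ, ∫ t in x..(1:ℝ), M.eval t = Q.eval x := by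
      intro x
      rw [integral_eval]
      simp [hQ]
    have hQ1 : Q.eval 1 = 0 := by simp [hQ]
    have hQderiv : derivative Q = -M := by simp [hQ, derivative_antider]
    have hQdeg : Q.natDegree ≤ N - 2 := by
      refine le_trans (natDegree_sub_le _ _) ?_
      simp only [natDegree_C, max_le_iff]
      exact ⟨by omega, le_trans (natDegree_antider_le _) (by omega)⟩
    have hdegQL : (Q * lagL τ i).natDegree ≤ 2 * N - 3 := by
      refine le_trans (natDegree_mul_le) ?_
      rw [hLdeg]
      omega
    have stepA : w i * Q.eval (τ i) = ∫ t in (-1:ℝ)..1, (Q * lagL τ i).eval t := by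
      rw [← hquad _ hdegQL, sumP]
    have hQLderiv : derivative (Q * q i) = -(M * q i) + Q * lagL τ i := by
      rw [derivative_mul, hQderiv, hqderiv]
      ring
    have stepB : ∫ t in (-1:ℝ)..1, (Q * lagL τ i).eval t
        = ∫ t in (-1:ℝ)..1, (M * q i).eval t := by
      have h := integral_derivative_eval (Q * q i) (-1) 1
      rw [hQLderiv] at h
      have hsplit : ∫ t in (-1:ℝ)..1, (-(M * q i) + Q * lagL τ i).eval t
          = (∫ t in (-1:ℝ)..1, -((M * q i).eval t))
            + ∫ t in (-1:ℝ)..1, (Q * lagL τ i).eval t := by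
        simp only [eval_add, eval_neg]
        exact intervalIntegral.integral_add
          (((Polynomial.continuous _).neg).intervalIntegrable _ _)
          ((Polynomial.continuous _).intervalIntegrable _ _)
      rw [hsplit, intervalIntegral.integral_neg] at h
      have hval : (Q * q i).eval 1 - (Q * q i).eval (-1) = 0 := by
        rw [eval_mul, eval_mul, hQ1, hqm1]
        ring
      rw [hval] at h
      linarith
    have hdegMq : (M * q i).natDegree ≤ 2 * N - 3 :=
      le_trans natDegree_mul_le (by have := hqdeg i; omega)
    have stepC : ∫ t in (-1:ℝ)..1, (M * q i).eval t = ∑ m, w m * (M * q i).eval (τ m) :=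
      (hquad _ hdegMq).symm
    have hlN : N - 1 < N := by omega
    have hklast : k ≠ (⟨N - 1, hlN⟩ : Fin N) := by
      rw [hk]
      simp only [ne_eq, Fin.ext_iff, Fin.val_mk]
      omega
    have stepD : ∑ m, w m * (M * q i).eval (τ m)
        = w k * (q i).eval (τ k) + w ⟨N - 1, hlN⟩ * M.eval 1 * w i := by
      rw [← Finset.sum_subset
        (Finset.subset_univ ({k, ⟨N - 1, hlN⟩} : Finset (Fin N)))
        (by
          intro x _ hx
          simp only [Finset.mem_insert, Finset.mem_singleton, not_or] at hx
          obtain ⟨hxk, hxl⟩ := hx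
          by_cases hx0 : (x : ℕ) = 0
          · rw [eval_mul, show x = ⟨0, by omega⟩ from Fin.ext hx0, hτ0, hqm1, mul_zero,
              mul_zero]
          · have hxS : x ∈ S := by
              rw [hS]
              simp only [Finset.mem_filter, Finset.mem_univ, true_and]
              have hxlt := x.isLt
              have hxne : (x : ℕ) ≠ N - 1 := fun h => hxl (Fin.ext h)
              omega
            rw [eval_mul, hMm x hxS hxk, zero_mul, mul_zero])]
      rw [Finset.sum_pair hklast, eval_mul, eval_mul, hMk, hτlast hlN, hq1 i]
      ring
    have key : w i * Q.eval (τ i) = w k * (q i).eval (τ k) + w ⟨N - 1, hlN⟩ * M.eval 1 * w i := by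
      rw [stepA, stepB, stepC, stepD]
    have hmatA : matA τ j i = (q i).eval (τ k) := by
      show (∫ t in (-1:ℝ)..(τ ⟨(j : ℕ) + 1, hkN⟩), (lagL τ i).eval t) = _
      rw [hqint]
    show (w i)⁻¹ * matA τ j i * w k = (∫ t in (τ i)..(1:ℝ), M.eval t) - w ⟨N - 1, hlN⟩ * M.eval 1
    rw [hQint (τ i), hmatA]
    have key2 : (q i).eval (τ k) * w k = w i * (Q.eval (τ i) - w ⟨N - 1, hlN⟩ * M.eval 1) := by
      nlinarith [key]
    calc (w i)⁻¹ * (q i).eval (τ k) * w k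
        = (w i)⁻¹ * ((q i).eval (τ k) * w k) := by ring
      _ = (w i)⁻¹ * (w i * (Q.eval (τ i) - w ⟨N - 1, hlN⟩ * M.eval 1)) := by rw [key2]
      _ = Q.eval (τ i) - w ⟨N - 1, hlN⟩ * M.eval 1 := by
          rw [← mul_assoc, inv_mul_cancel₀ (hNe i), one_mul]
  · -- last column
    intro i
    have hlt : N - 2 < N - 1 := by omega
    have hkN : N - 2 + 1 < N := by omega
    have hτn : τ (⟨N - 2 + 1, hkN⟩ : Fin N) = 1 := by
      rw [show (⟨N - 2 + 1, hkN⟩ : Fin N) = ⟨N - 1, by omega⟩ by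
        simp only [Fin.ext_iff, Fin.val_mk]; omega]
      exact hτlast _
    have hA : matA τ (⟨N - 2, hlt⟩ : Fin (N - 1)) i = w i := by
      show (∫ t in (-1:ℝ)..(τ ⟨N - 2 + 1, hkN⟩), (lagL τ i).eval t) = w i
      rw [hτn, hLquad]
    show (w i)⁻¹ * matA τ ⟨N - 2, hlt⟩ i * w ⟨N - 2 + 1, hkN⟩ = w ⟨N - 1, by omega⟩
    rw [hA, inv_mul_cancel₀ (hNe i), one_mul,
      show (⟨N - 2 + 1, hkN⟩ : Fin N) = ⟨N - 1, by omega⟩ by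
        simp only [Fin.ext_iff, Fin.val_mk]; omega]
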